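/- arXiv:1705.03263 — 3 statements merged into one kernel-verified Lean document; each statement's English description precedes it below -/
import Mathlib

section
/- Let n ≥ 1 and let C : (Fin n → Bool) → (Fin m → Bool) → Bool satisfy C (fun i => ! x i) (fun j => ! y j) = ! (C x y) for all x, y, and assume that for every x, (∃ y, C x y = true) ↔ ¬ (∃ y, C (fun i => ! x i) y = true). Then for every x : Fin n → Bool, (∃ y, C x y = true) ↔ C x (fun _ => x 0) = true; that is, replacing every non-deterministic input by the ordinary input x₀ yields a deterministic circuit computing the same function. -/
/-- For a self-dual non-deterministic circuit computing a self-dual function, replacing all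
non-deterministic inputs by the ordinary input x₀ yields a deterministic circuit computing
the same function. -/
theorem selfDual_nondet_to_det {n m : ℕ} (hn : 1 ≤ n)
    (C : (Fin n → Bool) → (Fin m → Bool) → Bool)
    (hsd : ∀ (x : Fin n → Bool) (y : Fin m → Bool),
      C (fun i => !x i) (fun j => !y j) = !(C x y))
    (hf : ∀ x : Fin n → Bool,
      (∃ y, C x y = true) ↔ ¬ (∃ y, C (fun i => !x i) y = true)) :
    ∀ x : Fin n → Bool, (∃ y, C x y = true) ↔ C x (fun _ => x ⟨0, hn⟩) = true := by
  intro x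
  constructor
  · intro hex
    have hnone : ∀ y, C (fun i => !x i) y = false := by
      intro y
      by_contra h
      exact ((hf x).mp hex) ⟨y, by simpa using h⟩
    by_contra h
    have hx : C x (fun _ => x ⟨0, hn⟩) = false := by simpa using h
    have := hsd x (fun _ => x ⟨0, hn⟩)
    rw [hx] at this
    have := hnone (fun j => !(x ⟨0, hn⟩))
    simp_all
  · intro h; exact ⟨_, h⟩
end

section
/- Every self-dual Boolean function f : (Fin n → Bool) → Bool with n ≥ 1 belongs to the clone generated by {d}, where d(x₁,x₂,x₃) = (x₁ ∧ ¬x₂) ∨ (¬x₂ ∧ ¬x₃) ∨ (¬x₃ ∧ x₁); that is, d generates the clone of all self-dual Boolean functions. -/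
/-- The clone generated by a set `B` of Boolean functions: the smallest family containing all
projections and `B`, and closed under composition. -/
inductive InClone (B : (k : ℕ) → ((Fin k → Bool) → Bool) → Prop) :
    (n : ℕ) → ((Fin n → Bool) → Bool) → Prop
  | proj {n : ℕ} (i : Fin n) : InClone B n (fun x => x i)
  | base {k : ℕ} {g : (Fin k → Bool) → Bool} (hg : B k g) : InClone B k g
  | comp {k n : ℕ} {g : (Fin k → Bool) → Bool} {h : Fin k → ((Fin n → Bool) → Bool)}
      (hg : InClone B k g) (hh : ∀ i, InClone B n (h i)) :
      InClone B n (fun x => g (fun i => h i x))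

/-- d(x₁,x₂,x₃) = (x₁ ∧ ¬x₂) ∨ (¬x₂ ∧ ¬x₃) ∨ (¬x₃ ∧ x₁). -/
def d : (Fin 3 → Bool) → Bool :=
  fun x => (x 0 && !x 1) || (!x 1 && !x 2) || (!x 2 && x 0)

/-- The generating set {d}. -/
inductive DBase : (k : ℕ) → ((Fin k → Bool) → Bool) → Prop
  | d : DBase 3 d

namespace CloneAux

lemma congr' {B : (k : ℕ) → ((Fin k → Bool) → Bool) → Prop} {n f g}
    (h : InClone B n f) (e : ∀ x, f x = g x) : InClone B n g :=
  (funext e : f = g) ▸ h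

def maj3 : (Fin 3 → Bool) → Bool := fun x => (x 0 && x 1) || (x 1 && x 2) || (x 2 && x 0)

lemma comp3 {n} {g : (Fin 3 → Bool) → Bool} (hg : InClone DBase 3 g)
    {h1 h2 h3 : (Fin n → Bool) → Bool}
    (H1 : InClone DBase n h1) (H2 : InClone DBase n h2) (H3 : InClone DBase n h3) :
    InClone DBase n (fun x => g ![h1 x, h2 x, h3 x]) := by
  have := InClone.comp (h := ![h1, h2, h3]) hg (fun i => by fin_cases i <;> [exact H1; exact H2; exact H3])
  refine congr' this fun x => ?_
  congr 1; funext i; fin_cases i <;> rfl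

lemma not_mem : InClone DBase 1 (fun x => !x 0) := by
  have := InClone.comp (h := fun _ : Fin 3 => fun x : Fin 1 → Bool => x 0)
    (InClone.base DBase.d) (fun _ => InClone.proj 0)
  refine congr' this fun x => ?_
  cases h : x 0 <;> simp [d, h]

lemma notAt {n} (i : Fin n) : InClone DBase n (fun x => !x i) :=
  InClone.comp (h := fun _ : Fin 1 => fun x : Fin n → Bool => x i) not_mem (fun _ => InClone.proj i)

lemma maj_mem : InClone DBase 3 maj3 := by
  have := comp3 (n := 3) (InClone.base DBase.d) (InClone.proj 0) (notAt 1) (notAt 2)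
  refine congr' this fun x => ?_
  cases h0 : x 0 <;> cases h1 : x 1 <;> cases h2 : x 2 <;> simp [d, maj3, h0, h1, h2]

lemma main : ∀ (m : ℕ) (f : (Fin (m+1) → Bool) → Bool),
    (∀ x : Fin (m+1) → Bool, f (fun i => !x i) = !(f x)) → InClone DBase (m+1) f := by
  intro m
  induction m with
  | zero =>
    intro f hf
    have hx : ∀ x : Fin 1 → Bool, x = fun _ => x 0 := by
      intro x; funext i; rw [Subsingleton.elim i 0]
    have h01 : f (fun _ => false) = !(f (fun _ => true)) := by
      have := hf (fun _ => true); simpa using this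
    cases hb : f (fun _ => true) with
    | true =>
      refine congr' (InClone.proj 0) fun x => ?_
      cases hx0 : x 0 with
      | true => rw [hx x, hx0, hb]
      | false => rw [hx x, hx0, h01, hb]; rfl
    | false =>
      refine congr' (notAt 0) fun x => ?_
      cases hx0 : x 0 with
      | true => rw [hx x, hx0, hb]; rfl
      | false => rw [hx x, hx0, h01, hb]
  | succ m ih =>
    intro f hf
    set p : (Fin (m+1) → Bool) → Bool := fun y => f (Fin.cons (y 0) y) with hp_def
    set q : (Fin (m+1) → Bool) → Bool := fun y => f (Fin.cons (!(y 0)) y) with hq_def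
    have hp : ∀ y : Fin (m+1) → Bool, p (fun i => !y i) = !(p y) := by
      intro y
      show f (Fin.cons (!(y 0)) (fun i => !y i)) = !(f (Fin.cons (y 0) y))
      rw [← hf (Fin.cons (y 0) y)]
      congr 1; funext j
      refine Fin.cases ?_ (fun i => ?_) j <;> simp
    have hq : ∀ y : Fin (m+1) → Bool, q (fun i => !y i) = !(q y) := by
      intro y
      show f (Fin.cons (!(!(y 0))) (fun i => !y i)) = !(f (Fin.cons (!(y 0)) y))
      rw [← hf (Fin.cons (!(y 0)) y)]
      congr 1; funext j
      refine Fin.cases ?_ (fun i => ?_) j <;> simp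
    have hP : InClone DBase (m+2) (fun x => p (fun i => x i.succ)) :=
      InClone.comp (h := fun i : Fin (m+1) => fun x : Fin (m+2) → Bool => x i.succ)
        (ih p hp) (fun i => InClone.proj i.succ)
    have hQ : InClone DBase (m+2) (fun x => q (fun i => x i.succ)) :=
      InClone.comp (h := fun i : Fin (m+1) => fun x : Fin (m+2) → Bool => x i.succ)
        (ih q hq) (fun i => InClone.proj i.succ)
    have hA : InClone DBase (m+2)
        (fun x => maj3 ![q (fun i => x i.succ), x 0, x 1]) :=
      comp3 maj_mem hQ (InClone.proj 0) (InClone.proj 1)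
    have hB : InClone DBase (m+2)
        (fun x => maj3 ![q (fun i => x i.succ), !(x 0), !(x 1)]) :=
      comp3 maj_mem hQ (notAt 0) (notAt 1)
    have hF := comp3 maj_mem hP hA hB
    -- key identities
    have keyp : ∀ x : Fin (m+2) → Bool, x 0 = x 1 → f x = p (fun i => x i.succ) := by
      intro x h
      show f x = f (Fin.cons (x (Fin.succ 0)) (fun i => x i.succ))
      congr 1; funext j
      refine Fin.cases ?_ (fun i => ?_) j <;> simp [Fin.succ_zero_eq_one]
      rw [h]
    have keyq : ∀ x : Fin (m+2) → Bool, x 0 = !(x 1) → f x = q (fun i => x i.succ) := by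
      intro x h
      show f x = f (Fin.cons (!(x (Fin.succ 0))) (fun i => x i.succ))
      congr 1; funext j
      refine Fin.cases ?_ (fun i => ?_) j <;> simp [Fin.succ_zero_eq_one]
      rw [h]
    refine congr' hF fun x => ?_
    cases h0 : x 0 <;> cases h1 : x 1
    · rw [keyp x (by rw [h0, h1])]
      cases p (fun i => x i.succ) <;> cases q (fun i => x i.succ) <;>
        simp [maj3, h0, h1]
    · rw [keyq x (by rw [h0, h1]; rfl)]
      cases p (fun i => x i.succ) <;> cases q (fun i => x i.succ) <;>
        simp [maj3, h0, h1]
    · rw [keyq x (by rw [h0, h1]; rfl)]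
      cases p (fun i => x i.succ) <;> cases q (fun i => x i.succ) <;>
        simp [maj3, h0, h1]
    · rw [keyp x (by rw [h0, h1])]
      cases p (fun i => x i.succ) <;> cases q (fun i => x i.succ) <;>
        simp [maj3, h0, h1]

end CloneAux


/-- Every self-dual Boolean function (with n ≥ 1) belongs to the clone generated by {d}. -/
theorem selfDual_mem_clone_d {n : ℕ} (hn : 1 ≤ n) (f : (Fin n → Bool) → Bool)
    (hf : ∀ x : Fin n → Bool, f (fun i => !x i) = !(f x)) :
    InClone DBase n f := by
  obtain ⟨m, rfl⟩ : ∃ m, n = m + 1 := ⟨n - 1, by omega⟩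
  exact CloneAux.main m f hf
end

section
/- A Boolean function f : (Fin n → Bool) → Bool (with n ≥ 1) belongs to the clone generated by binary XOR and the constant function true if and only if f is affine, i.e., there exist a finite set S ⊆ Fin n and a constant c : Bool such that for every x, f x = c XOR (the XOR over all i ∈ S of x i). -/
open scoped symmDiff

/-- The generating set {⊕, 1}: binary XOR and the constant function true (arity 1). -/
inductive LinBase : (k : ℕ) → ((Fin k → Bool) → Bool) → Prop
  | xor : LinBase 2 (fun x => xor (x 0) (x 1))
  | one : LinBase 1 (fun _ => true)

instance : Std.Commutative xor := ⟨Bool.xor_comm⟩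
instance : Std.Associative xor := ⟨Bool.xor_assoc⟩

lemma fold_xor_symmDiff {α : Type*} [DecidableEq α] (S T : Finset α) (g : α → Bool) :
    (S ∆ T).fold xor false g = xor (S.fold xor false g) (T.fold xor false g) := by
  induction S using Finset.induction_on with
  | empty => simp [symmDiff_def]
  | @insert a S ha ih =>
    by_cases haT : a ∈ T
    · have hmem : a ∈ S ∆ T := by simp [Finset.mem_symmDiff, ha, haT]
      have hset : (insert a S) ∆ T = (S ∆ T).erase a := by
        ext b; simp only [Finset.mem_symmDiff, Finset.mem_erase, Finset.mem_insert]
        by_cases hb : b = a <;> simp [hb, haT, ha]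
      have key : (S ∆ T).fold xor false g = xor (g a) (((S ∆ T).erase a).fold xor false g) := by
        conv_lhs => rw [← Finset.insert_erase hmem]
        rw [Finset.fold_insert (Finset.notMem_erase a _)]
      have h3 : ((S ∆ T).erase a).fold xor false g = xor (g a) ((S ∆ T).fold xor false g) := by
        rw [key]; cases g a <;> simp
      rw [hset, Finset.fold_insert ha, h3, ih, Bool.xor_assoc]
    · have hset : (insert a S) ∆ T = insert a (S ∆ T) := by
        ext b; simp only [Finset.mem_symmDiff, Finset.mem_insert]
        by_cases hb : b = a <;> simp [hb, haT, ha]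
      have hnm : a ∉ S ∆ T := by simp [Finset.mem_symmDiff, ha, haT]
      rw [hset, Finset.fold_insert ha, Finset.fold_insert hnm, ih, Bool.xor_assoc]

lemma InClone.congr' {B : (k : ℕ) → ((Fin k → Bool) → Bool) → Prop} {n : ℕ}
    {f g : (Fin n → Bool) → Bool} (h : InClone B n f) (e : ∀ x, f x = g x) :
    InClone B n g := funext e ▸ h

lemma xor_mem {n : ℕ} {A C : (Fin n → Bool) → Bool}
    (hA : InClone LinBase n A) (hC : InClone LinBase n C) :
    InClone LinBase n (fun x => xor (A x) (C x)) := by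
  have := InClone.comp (h := fun i : Fin 2 => if i = 0 then A else C)
    (.base LinBase.xor) (fun i => by fin_cases i <;> simp [hA, hC])
  exact this.congr' (fun x => by simp)

lemma true_mem {n : ℕ} (hn : 1 ≤ n) : InClone LinBase n (fun _ => true) := by
  have := InClone.comp (h := fun _ : Fin 1 => fun x : Fin n → Bool => x ⟨0, hn⟩)
    (.base LinBase.one) (fun i => .proj _)
  exact this.congr' (fun x => rfl)

lemma fold_mem {n : ℕ} (hn : 1 ≤ n) (S : Finset (Fin n)) :
    InClone LinBase n (fun x => S.fold xor false (fun i => x i)) := by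
  induction S using Finset.induction_on with
  | empty =>
    have := xor_mem (true_mem hn) (true_mem hn)
    exact this.congr' (fun x => by simp)
  | @insert a S ha ih =>
    have := xor_mem (InClone.proj a) ih
    exact this.congr' (fun x => by rw [Finset.fold_insert ha])

/-- A Boolean function (with n ≥ 1) is in the clone generated by {⊕, 1} iff it is affine,
i.e. of the form c ⊕ (⊕_{i ∈ S} xᵢ). -/
theorem clone_lin_iff_affine {n : ℕ} (hn : 1 ≤ n) (f : (Fin n → Bool) → Bool) :
    InClone LinBase n f ↔
      ∃ (S : Finset (Fin n)) (c : Bool),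
        ∀ x : Fin n → Bool, f x = xor c (S.fold xor false (fun i => x i)) := by
  constructor
  · intro hf
    clear hn
    induction hf with
    | proj i => exact ⟨{i}, false, fun x => by simp⟩
    | base hg =>
      cases hg with
      | xor =>
        refine ⟨{0, 1}, false, fun x => ?_⟩
        rw [Finset.fold_insert (by decide)]
        simp
      | one => exact ⟨∅, true, fun x => by simp⟩
    | @comp k m g h hg hh ihg ihh =>
      obtain ⟨T, c, hTc⟩ := ihg
      -- show the fold of affine functions is affine
      choose Sf cf hf using ihh
      clear hg hh
      have main : ∀ T : Finset (Fin k), ∃ (S : Finset (Fin m)) (c : Bool),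
          ∀ x, T.fold xor false (fun i => h i x) = xor c (S.fold xor false (fun i => x i)) := by
        intro T
        induction T using Finset.induction_on with
        | empty => exact ⟨∅, false, fun x => by simp⟩
        | @insert a T ha ih =>
          obtain ⟨S, c, hSc⟩ := ih
          refine ⟨Sf a ∆ S, xor (cf a) c, fun x => ?_⟩
          rw [Finset.fold_insert ha, hSc, hf a x, fold_xor_symmDiff]
          cases cf a <;> cases c <;>
            cases (Sf a).fold xor false (fun i => x i) <;>
            cases S.fold xor false (fun i => x i) <;> rfl
      obtain ⟨S, c', hSc⟩ := main T
      exact ⟨S, xor c c', fun x => by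
        show g (fun i => h i x) = _
        rw [hTc, hSc x]
        cases c <;> cases c' <;> simp [Bool.xor_assoc]⟩
  · rintro ⟨S, c, hSc⟩
    have hfold := fold_mem hn S
    cases c with
    | false =>
      exact hfold.congr' (fun x => by rw [hSc x]; simp)
    | true =>
      exact (xor_mem (true_mem hn) hfold).congr' (fun x => (hSc x).symm)
end
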